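/- Let N ≥ 1 and let I : Fin N → ℕ be a family of positive dimensions, and let X : (∀ k : Fin N, Fin (I k)) → ℝ be an order-N real tensor. Then there exist ranks R : Fin (N+1) → ℕ with R 0 = 1 and R N = 1, and cores G : ∀ k : Fin N, Fin (R k.castSucc) → Fin (I k) → Fin (R k.succ) → ℝ, such that X i = Σ_{r : ∀ j : Fin (N+1), Fin (R j)} ∏_{k : Fin N} G k (r k.castSucc) (i k) (r k.succ) holds exactly for all i, and moreover for each n with 1 ≤ n ≤ N−1 the rank R n equals the matrix rank of the n-th unfolding X⟨n⟩ of X; in particular R n ≤ min(∏_{k < n} I k, ∏_{k ≥ n} I k). -/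

import Mathlib

noncomputable section

/-- The entry at multi-index `i` of the tensor train with ranks `R` and cores `G`. -/
def ttEntry {N : ℕ} (I : Fin N → ℕ) (R : Fin (N + 1) → ℕ)
    (G : ∀ k : Fin N, Fin (R k.castSucc) → Fin (I k) → Fin (R k.succ) → ℝ)
    (i : ∀ k : Fin N, Fin (I k)) : ℝ :=
  ∑ r : ∀ j : Fin (N + 1), Fin (R j),
    ∏ k : Fin N, G k (r k.castSucc) (i k) (r k.succ)

/-- The `n`-th unfolding of an order-`N` tensor `X`: the matrix whose rows are indexed by
the index tuples `(i k)_{k < n}`, whose columns are indexed by the tuples `(i k)_{k ≥ n}`,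
and whose entries are the corresponding entries of `X`. -/
def unfold {N : ℕ} (I : Fin N → ℕ) (X : (∀ k : Fin N, Fin (I k)) → ℝ) (n : ℕ) :
    Matrix (∀ k : {k : Fin N // (k : ℕ) < n}, Fin (I k.1))
           (∀ k : {k : Fin N // n ≤ (k : ℕ)}, Fin (I k.1)) ℝ :=
  fun row col =>
    X (fun k => if h : (k : ℕ) < n then row ⟨k, h⟩ else col ⟨k, not_lt.mp h⟩)

namespace TTaux
open Matrix

/-- Left-to-right partial contraction vector of a chain of matrices. -/
def chainRow : ∀ (n : ℕ) (R : ℕ → ℕ)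
    (_ : ∀ k : ℕ, k < n → Fin (R k) → Fin (R (k + 1)) → ℝ),
    (Fin (R 0) → ℝ) → Fin (R n) → ℝ
  | 0, _, _, u => u
  | n + 1, R, M, u => fun b =>
      ∑ c : Fin (R n),
        chainRow n R (fun k hk => M k (hk.trans (Nat.lt_succ_self n))) u c *
          M n (Nat.lt_succ_self n) c b

theorem chain_sum : ∀ (n : ℕ) (R : ℕ → ℕ)
    (M : ∀ k : ℕ, k < n → Fin (R k) → Fin (R (k + 1)) → ℝ)
    (u : Fin (R 0) → ℝ) (w : Fin (R n) → ℝ),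
    ∑ r : ∀ j : Fin (n + 1), Fin (R j.val),
      u (r 0) * (∏ k : Fin n, M k.val k.isLt (r k.castSucc) (r k.succ)) * w (r (Fin.last n))
      = ∑ b, chainRow n R M u b * w b := by
  intro n
  induction n with
  | zero =>
    intro R M u w
    rw [← Equiv.sum_comp (Equiv.piUnique (fun j : Fin 1 => Fin (R j.val))).symm]
    simp only [chainRow, Equiv.piUnique, Equiv.coe_fn_symm_mk]
    refine Finset.sum_congr rfl fun x _ => ?_
    have key : ∀ j : Fin 1, HEq (uniqueElim (α := fun j : Fin 1 => Fin (R j.val)) x j) x := by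
      intro j; rw [Unique.eq_default j]; exact heq_of_eq (uniqueElim_default _)
    rw [eq_of_heq (key 0), eq_of_heq (key (Fin.last 0))]
    simp
  | succ n ih =>
    intro R M u w
    rw [← Equiv.sum_comp (Fin.snocEquiv (fun j : Fin (n + 2) => Fin (R j.val)))]
    rw [Fintype.sum_prod_type]
    have step1 : ∀ (b : Fin (R (n + 1))) (p : ∀ i : Fin (n + 1), Fin (R i.castSucc.val)),
        u ((Fin.snoc p b : ∀ j : Fin (n + 2), Fin (R j.val)) 0) *
          (∏ k : Fin (n + 1), M k.val k.isLt
            ((Fin.snoc p b : ∀ j : Fin (n + 2), Fin (R j.val)) k.castSucc)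
            ((Fin.snoc p b : ∀ j : Fin (n + 2), Fin (R j.val)) k.succ)) *
          w ((Fin.snoc p b : ∀ j : Fin (n + 2), Fin (R j.val)) (Fin.last (n + 1)))
        = u (p 0) *
            (∏ k : Fin n, M k.val (Nat.lt_succ_of_lt k.isLt) (p k.castSucc) (p k.succ)) *
            (M n (Nat.lt_succ_self n) (p (Fin.last n)) b * w b) := by
      intro b p
      have hkey : ∀ (j : Fin (n + 2)) (i : Fin (n + 1)), j = i.castSucc →
          HEq ((Fin.snoc p b : ∀ j : Fin (n + 2), Fin (R j.val)) j) (p i) := by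
        rintro j i rfl; exact heq_of_eq (Fin.snoc_castSucc ..)
      have hlastkey : ∀ j : Fin (n + 2), j = Fin.last (n + 1) →
          HEq ((Fin.snoc p b : ∀ j : Fin (n + 2), Fin (R j.val)) j) b := by
        rintro j rfl; exact heq_of_eq (Fin.snoc_last ..)
      rw [Fin.prod_univ_castSucc]
      rw [eq_of_heq (hkey 0 0 (Fin.castSucc_zero').symm)]
      rw [eq_of_heq (hlastkey _ rfl)]
      rw [eq_of_heq (hlastkey ((Fin.last n).succ) (Fin.succ_last n))]
      simp only [Fin.snoc_castSucc]
      have hp : ∀ i : Fin n,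
          (Fin.snoc p b : ∀ j : Fin (n + 2), Fin (R j.val)) i.castSucc.succ = p i.succ :=
        fun i => eq_of_heq (hkey _ i.succ (Fin.succ_castSucc i))
      simp only [hp, Fin.coe_castSucc, Fin.val_last]
      ring
    refine (Finset.sum_congr rfl fun b _ => Finset.sum_congr rfl fun p _ => step1 b p).trans ?_
    refine (Finset.sum_congr rfl fun b _ =>
      ih R (fun k hk => M k (hk.trans (Nat.lt_succ_self n))) u
        (fun c => M n (Nat.lt_succ_self n) c b * w b)).trans ?_
    simp only [chainRow, Finset.sum_mul, mul_assoc]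


variable {N : ℕ} (I : Fin N → ℕ)

abbrev Row (n : ℕ) := ∀ k : {k : Fin N // (k : ℕ) < n}, Fin (I k.1)
abbrev Col (n : ℕ) := ∀ k : {k : Fin N // n ≤ (k : ℕ)}, Fin (I k.1)

def glue (n : ℕ) (hn : n < N) (r : Row I n) (j : Fin (I ⟨n, hn⟩)) : Row I (n + 1) :=
  fun k => if h : (k.1 : ℕ) < n then r ⟨k.1, h⟩
    else Fin.cast (congrArg I (Fin.ext (show ((⟨n, hn⟩ : Fin N) : ℕ) = (k.1 : ℕ) by
      have := k.2; simp only [Fin.val_mk]; omega))) j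

def restrict (n : ℕ) (r : Row I (n + 1)) : Row I n :=
  fun k => r ⟨k.1, Nat.lt_succ_of_lt k.2⟩

def extend (n : ℕ) (hn : n < N) (c : Col I (n + 1)) (j : Fin (I ⟨n, hn⟩)) : Col I n :=
  fun k => if h : n + 1 ≤ (k.1 : ℕ) then c ⟨k.1, h⟩
    else Fin.cast (congrArg I (Fin.ext (show ((⟨n, hn⟩ : Fin N) : ℕ) = (k.1 : ℕ) by
      have := k.2; simp only [Fin.val_mk]; omega))) j

theorem cols_glue (X : (∀ k : Fin N, Fin (I k)) → ℝ) (n : ℕ) (hn : n < N)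
    (c : Col I (n + 1)) (j : Fin (I ⟨n, hn⟩)) (r : Row I n) :
    (unfold I X (n + 1))ᵀ c (glue I n hn r j) = (unfold I X n)ᵀ (extend I n hn c j) r := by
  simp only [Matrix.transpose_apply, unfold]
  congr 1
  funext q
  rcases Nat.lt_trichotomy (q : ℕ) n with hq | hq | hq
  · rw [dif_pos (Nat.lt_succ_of_lt hq), dif_pos hq]
    simp only [glue]
    rw [dif_pos hq]
  · rw [dif_pos (by omega : (q : ℕ) < n + 1), dif_neg (by omega : ¬ (q : ℕ) < n)]
    simp only [glue, extend]
    rw [dif_neg (by omega : ¬ (q : ℕ) < n), dif_neg (by omega : ¬ n + 1 ≤ (q : ℕ))]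
  · rw [dif_neg (by omega : ¬ (q : ℕ) < n + 1), dif_neg (by omega : ¬ (q : ℕ) < n)]
    simp only [extend]
    rw [dif_pos (by omega : n + 1 ≤ (q : ℕ))]

theorem glue_restrict (n : ℕ) (hn : n < N) (r : Row I (n + 1)) :
    glue I n hn (restrict I n r) (r ⟨⟨n, hn⟩, Nat.lt_succ_self n⟩) = r := by
  funext k
  simp only [glue]
  by_cases h : (k.1 : ℕ) < n
  · rw [dif_pos h]; rfl
  · rw [dif_neg h]
    have h2 := k.2
    have hk : (⟨⟨n, hn⟩, Nat.lt_succ_self n⟩ : {k : Fin N // (k : ℕ) < n + 1}) = k :=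
      Subtype.ext (Fin.ext (by simp only [Fin.val_mk]; omega))
    subst hk
    apply Fin.val_injective
    simp only [Fin.coe_cast]


variable {I}

theorem exists_A (hN : 1 ≤ N) (X : (∀ k : Fin N, Fin (I k)) → ℝ) (Rnat : ℕ → ℕ)
    (hR0 : Rnat 0 = 1) (hRN : Rnat N = 1)
    (hRmid : ∀ n, n ≠ 0 → n ≠ N → n ≤ N → Rnat n = (unfold I X n).rank) :
    ∀ n : ℕ, ∃ A : Fin (Rnat n) → (Row I n → ℝ),
      (1 ≤ n → n ≤ N → ∀ α, A α ∈ Submodule.span ℝ (Set.range (unfold I X n)ᵀ)) ∧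
      (n ≤ N → ∀ c, (unfold I X n)ᵀ c ∈ Submodule.span ℝ (Set.range A)) ∧
      (n = 0 → ∀ α r, A α r = 1) ∧
      (∀ h : n = N, ∀ α r, A α r = X (fun k => r ⟨k, Nat.lt_of_lt_of_le k.isLt h.symm.le⟩)) := by
  intro n
  by_cases h0 : n = 0
  · subst h0
    haveI : IsEmpty {k : Fin N // (k : ℕ) < 0} := ⟨fun k => Nat.not_lt_zero _ k.2⟩
    refine ⟨fun _ _ => 1, fun h => absurd h (by omega), ?_, fun _ _ _ => rfl,
      fun hE => absurd hE (by omega)⟩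
    intro _ c
    rw [Submodule.mem_span_range_iff_exists_fun]
    refine ⟨fun _ => (unfold I X 0)ᵀ c default, ?_⟩
    funext r
    rw [Subsingleton.elim r default]
    simp only [Finset.sum_apply, Pi.smul_apply, smul_eq_mul, mul_one]
    rw [Finset.sum_const, Finset.card_univ, Fintype.card_fin, hR0, one_smul]
  · by_cases hn2 : n = N
    · subst hn2
      haveI : IsEmpty {k : Fin n // n ≤ (k : ℕ)} :=
        ⟨fun k => absurd k.2 (Nat.not_le.mpr k.1.isLt)⟩
      have hcol : ∀ c : Col I n, (unfold I X n)ᵀ c = fun r => X (fun k => r ⟨k, k.isLt⟩) := by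
        intro c
        funext r
        show X _ = X _
        congr 1
        funext k
        rw [dif_pos k.isLt]
      refine ⟨fun _ r => X (fun k => r ⟨k, k.isLt⟩), fun _ _ α => ?_, fun _ c => ?_,
        fun hE => absurd hE (by omega), fun _ _ _ => rfl⟩
      · exact Submodule.subset_span ⟨default, hcol default⟩
      · rw [hcol c]
        exact Submodule.subset_span ⟨⟨0, by omega⟩, rfl⟩
    · by_cases hn3 : n ≤ N
      · have hrk : Module.finrank ℝ (Submodule.span ℝ (Set.range (unfold I X n)ᵀ)) = Rnat n := by
          rw [hRmid n h0 hn2 hn3]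
          exact (Matrix.rank_eq_finrank_span_cols _).symm
        let b : Module.Basis (Fin (Rnat n)) ℝ (Submodule.span ℝ (Set.range (unfold I X n)ᵀ)) :=
          Module.finBasisOfFinrankEq ℝ _ hrk
        refine ⟨fun α => (b α : Row I n → ℝ), fun _ _ α => (b α).2, fun _ c => ?_,
          fun hE => absurd hE h0, fun hE => absurd hE hn2⟩
        have h1 : Submodule.span ℝ (Set.range fun α => (b α : Row I n → ℝ))
            = Submodule.span ℝ (Set.range (unfold I X n)ᵀ) := by
          have h2 : (Set.range fun α => (b α : Row I n → ℝ)) = Subtype.val '' Set.range b := by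
            rw [← Set.range_comp]; rfl
          rw [h2, ← Submodule.coe_subtype, ← Submodule.map_span, b.span_eq,
            Submodule.map_subtype_top]
        rw [h1]
        exact Submodule.subset_span (Set.mem_range_self c)
      · exact ⟨fun _ _ => 0, fun _ h => absurd h hn3, fun h => absurd h hn3,
          fun h => absurd h h0, fun h => absurd h hn2⟩


end TTaux

/-- **Exactness of TT-SVD.** Every order-`N` real tensor admits an exact tensor-train
decomposition whose ranks are the matrix ranks of its sequential unfoldings; in
particular each rank is bounded by the corresponding minimum of products of dimensions. -/
theorem tt_svd_exact
    (N : ℕ) (hN : 1 ≤ N) (I : Fin N → ℕ) (hI : ∀ k, 0 < I k)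
    (X : (∀ k : Fin N, Fin (I k)) → ℝ) :
    ∃ (R : Fin (N + 1) → ℕ)
      (G : ∀ k : Fin N, Fin (R k.castSucc) → Fin (I k) → Fin (R k.succ) → ℝ),
      R 0 = 1 ∧ R (Fin.last N) = 1 ∧
      (∀ i, X i = ttEntry I R G i) ∧
      (∀ n : Fin (N + 1), 1 ≤ (n : ℕ) → (n : ℕ) ≤ N - 1 →
        R n = (unfold I X (n : ℕ)).rank ∧
        R n ≤ min (∏ k : {k : Fin N // (k : ℕ) < (n : ℕ)}, I k.1)
                  (∏ k : {k : Fin N // (n : ℕ) ≤ (k : ℕ)}, I k.1)) := by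
  classical
  obtain ⟨Rnat, hR0, hRN, hRmid⟩ :
      ∃ R : ℕ → ℕ, R 0 = 1 ∧ R N = 1 ∧
        ∀ n, n ≠ 0 → n ≠ N → n ≤ N → R n = (unfold I X n).rank :=
    ⟨fun n => if n = 0 ∨ n = N then 1 else (unfold I X n).rank, by simp, by simp,
      fun n h1 h2 _ => by simp [h1, h2]⟩
  choose A hA1 hA2 hA3 hA4 using TTaux.exists_A hN X Rnat hR0 hRN hRmid
  have EG : ∀ (n : ℕ) (hn : n < N) (j : Fin (I ⟨n, hn⟩)) (α : Fin (Rnat (n + 1))),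
      ∃ gc : Fin (Rnat n) → ℝ, ∀ r : TTaux.Row I n,
        A (n + 1) α (TTaux.glue I n hn r j) = ∑ β, gc β * A n β r := by
    intro n hn j α
    have hmem := hA1 (n + 1) (by omega) (by omega) α
    have hmap := Submodule.mem_map_of_mem
      (f := LinearMap.funLeft ℝ ℝ (fun r => TTaux.glue I n hn r j)) hmem
    rw [Submodule.map_span] at hmap
    have hle : Submodule.span ℝ
        ((LinearMap.funLeft ℝ ℝ (fun r => TTaux.glue I n hn r j)) ''
          Set.range (unfold I X (n + 1)).transpose)
        ≤ Submodule.span ℝ (Set.range (A n)) := by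
      apply Submodule.span_le.mpr
      rintro f ⟨gg, ⟨c, rfl⟩, rfl⟩
      have hc : (LinearMap.funLeft ℝ ℝ (fun r => TTaux.glue I n hn r j))
          ((unfold I X (n + 1)).transpose c) = (unfold I X n).transpose (TTaux.extend I n hn c j) := by
        funext r
        exact TTaux.cols_glue I X n hn c j r
      rw [hc]
      exact hA2 n (by omega) _
    have h2 := hle hmap
    rw [Submodule.mem_span_range_iff_exists_fun] at h2
    obtain ⟨gc, hgc⟩ := h2
    refine ⟨gc, fun r => ?_⟩
    have h3 := congrFun hgc r
    simp only [Finset.sum_apply, Pi.smul_apply, smul_eq_mul,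
      LinearMap.funLeft_apply] at h3
    exact h3.symm
  choose g hg using EG
  have main : ∀ (n : ℕ) (hn : n ≤ N) (r : TTaux.Row I n) (b : Fin (Rnat n)),
      TTaux.chainRow n Rnat
        (fun k hk x y => g k (lt_of_lt_of_le hk hn) (r ⟨⟨k, lt_of_lt_of_le hk hn⟩, hk⟩) y x)
        (fun _ => 1) b = A n b r := by
    intro n
    induction n with
    | zero => intro hn r b; exact (hA3 0 rfl b r).symm
    | succ n ih =>
      intro hn r b
      have hnN : n < N := hn
      have hkey : ∀ c : Fin (Rnat n),
          TTaux.chainRow n Rnat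
            (fun k hk x y => g k (lt_of_lt_of_le hk (Nat.le_of_succ_le hn))
              ((TTaux.restrict I n r) ⟨⟨k, lt_of_lt_of_le hk (Nat.le_of_succ_le hn)⟩, hk⟩) y x)
            (fun _ => 1) c = A n c (TTaux.restrict I n r) :=
        fun c => ih (Nat.le_of_succ_le hn) (TTaux.restrict I n r) c
      calc TTaux.chainRow (n + 1) Rnat
            (fun k hk x y => g k (lt_of_lt_of_le hk hn) (r ⟨⟨k, lt_of_lt_of_le hk hn⟩, hk⟩) y x)
            (fun _ => 1) b
          = ∑ c : Fin (Rnat n), A n c (TTaux.restrict I n r) *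
              g n hnN (r ⟨⟨n, hnN⟩, Nat.lt_succ_self n⟩) b c :=
            Finset.sum_congr rfl fun c _ =>
              congrArg (· * g n hnN (r ⟨⟨n, hnN⟩, Nat.lt_succ_self n⟩) b c) (hkey c)
        _ = ∑ c : Fin (Rnat n), g n hnN (r ⟨⟨n, hnN⟩, Nat.lt_succ_self n⟩) b c *
              A n c (TTaux.restrict I n r) :=
            Finset.sum_congr rfl fun c _ => mul_comm _ _
        _ = A (n + 1) b (TTaux.glue I n hnN (TTaux.restrict I n r)
              (r ⟨⟨n, hnN⟩, Nat.lt_succ_self n⟩)) :=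
            (hg n hnN (r ⟨⟨n, hnN⟩, Nat.lt_succ_self n⟩) b (TTaux.restrict I n r)).symm
        _ = A (n + 1) b r := by rw [TTaux.glue_restrict]
  refine ⟨fun j => Rnat j.val, fun k β j α => g k.val k.isLt j α β, by simpa using hR0,
    by simpa using hRN, fun i => ?_, fun n hn1 hn2 => ?_⟩
  · -- X i = ttEntry
    have hsum := TTaux.chain_sum N Rnat (fun k hk x y => g k hk (i ⟨k, hk⟩) y x)
      (fun _ => 1) (fun _ => 1)
    have h1 : ttEntry I (fun j => Rnat j.val) (fun k β j α => g k.val k.isLt j α β) i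
        = ∑ r : ∀ j : Fin (N + 1), Fin (Rnat j.val),
            (1 : ℝ) * (∏ k : Fin N, g k.val k.isLt (i ⟨k.val, k.isLt⟩) (r k.succ) (r k.castSucc)) * 1 := by
      refine Finset.sum_congr rfl fun r _ => ?_
      rw [one_mul, mul_one]
    have hXi : ∀ b : Fin (Rnat N),
        TTaux.chainRow N Rnat (fun k hk x y => g k hk (i ⟨k, hk⟩) y x) (fun _ => 1) b
          = X i := by
      intro b
      have h4 := main N le_rfl (fun k : {k : Fin N // (k : ℕ) < N} => i k.1) b
      have h5 := hA4 N rfl b (fun k : {k : Fin N // (k : ℕ) < N} => i k.1)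
      exact h4.trans h5
    rw [h1, hsum]
    have h6 : ∀ b : Fin (Rnat N),
        TTaux.chainRow N Rnat (fun k hk x y => g k hk (i ⟨k, hk⟩) y x) (fun _ => 1) b * 1
          = X i := fun b => by rw [mul_one]; exact hXi b
    rw [Finset.sum_congr rfl fun b _ => h6 b, Finset.sum_const, Finset.card_univ,
      Fintype.card_fin, hRN, one_smul]
  · -- rank statements
    have hne0 : (n : ℕ) ≠ 0 := by omega
    have hneN : (n : ℕ) ≠ N := by omega
    have hle : (n : ℕ) ≤ N := by omega
    have hr := hRmid (n : ℕ) hne0 hneN hle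
    refine ⟨hr, ?_⟩
    show Rnat (n : ℕ) ≤ _
    rw [hr]
    refine le_min ?_ ?_
    · exact (Matrix.rank_le_card_height _).trans (le_of_eq (by simp [Fintype.card_pi]))
    · exact (Matrix.rank_le_card_width _).trans (le_of_eq (by simp [Fintype.card_pi]))

end
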